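/- arXiv:2408.02150 — 5 statements merged into one kernel-verified Lean document; each statement's English description precedes it below -/
import Mathlib

section
/- Let X and U be Banach spaces, τ > 0, and F : [0,τ] → L(U,X) a function of bounded semivariation. Then for every x' ∈ X' with ‖x'‖ ≤ 1, the function t ↦ F(t)' x' (taking values in U') has bounded variation on [0,τ], and Var₀^τ(F(·)'x') ≤ 2·SV₀^τ(F). -/
open scoped ENNReal

/-- The semivariation of an operator-valued function on `[0, τ]`. -/
noncomputable def semivariation {𝕜 U X : Type*} [RCLike 𝕜] [NormedAddCommGroup U]
    [NormedSpace 𝕜 U] [NormedAddCommGroup X] [NormedSpace 𝕜 X]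
    (τ : ℝ) (f : ℝ → (U →L[𝕜] X)) : ℝ≥0∞ :=
  ⨆ (n : ℕ) (t : Fin (n + 1) → ℝ) (_ : StrictMono t) (_ : t 0 = 0)
    (_ : t (Fin.last n) = τ) (u : Fin n → U) (_ : ∀ i, ‖u i‖ ≤ 1),
    (‖∑ i : Fin n, (f (t i.succ) - f (t i.castSucc)) (u i)‖₊ : ℝ≥0∞)

/-- The variation of a vector-valued function on `[0, τ]`. -/
noncomputable def vecVariation {E : Type*} [NormedAddCommGroup E]
    (τ : ℝ) (g : ℝ → E) : ℝ≥0∞ :=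
  ⨆ (n : ℕ) (t : Fin (n + 1) → ℝ) (_ : StrictMono t) (_ : t 0 = 0)
    (_ : t (Fin.last n) = τ),
    ∑ i : Fin n, (‖g (t i.succ) - g (t i.castSucc)‖₊ : ℝ≥0∞)

/-- if `F` has bounded semivariation on `[0,τ]`, then for every functional
`x'` of norm at most one, the `U'`-valued function `t ↦ F(t)' x' = x' ∘ F(t)` has bounded
variation on `[0,τ]`, with `Var₀^τ(F(·)'x') ≤ 2 · SV₀^τ(F)`. -/
theorem vecVariation_dual_le_two_mul_semivariation {𝕜 U X : Type*} [RCLike 𝕜]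
    [NormedAddCommGroup U] [NormedSpace 𝕜 U] [CompleteSpace U]
    [NormedAddCommGroup X] [NormedSpace 𝕜 X] [CompleteSpace X]
    {τ : ℝ} (hτ : 0 < τ) (F : ℝ → (U →L[𝕜] X))
    (hF : semivariation τ F < ⊤)
    (x' : StrongDual 𝕜 X) (hx' : ‖x'‖ ≤ 1) :
    vecVariation τ (fun t => x'.comp (F t)) ≤ 2 * semivariation τ F := by
  have hSV : semivariation τ F ≠ ⊤ := hF.ne
  set S : ℝ := (semivariation τ F).toReal with hS
  rw [vecVariation]
  refine iSup_le fun n => iSup_le fun t => iSup_le fun hmono => iSup_le fun h0 =>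
    iSup_le fun hlast => ?_
  have key : ∀ u : Fin n → U, (∀ i, ‖u i‖ ≤ 1) →
      ‖∑ i : Fin n, (F (t i.succ) - F (t i.castSucc)) (u i)‖ ≤ S := by
    intro u hu
    have h1 : (‖∑ i : Fin n, (F (t i.succ) - F (t i.castSucc)) (u i)‖₊ : ℝ≥0∞)
        ≤ semivariation τ F := by
      rw [semivariation]
      exact le_iSup_of_le n (le_iSup_of_le t (le_iSup_of_le hmono (le_iSup_of_le h0
        (le_iSup_of_le hlast (le_iSup_of_le u (le_iSup_of_le hu le_rfl))))))
    have := ENNReal.toReal_mono hSV h1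
    simpa using this
  set g : Fin n → (U →L[𝕜] 𝕜) :=
    fun i => x'.comp (F (t i.succ)) - x'.comp (F (t i.castSucc)) with hg
  have hgapp : ∀ (i : Fin n) (v : U),
      g i v = x' ((F (t i.succ) - F (t i.castSucc)) v) := by
    intro i v
    simp [hg, ContinuousLinearMap.sub_apply, map_sub]
  have main : ∑ i : Fin n, ‖g i‖ ≤ 2 * S := by
    refine le_of_forall_pos_le_add fun ε hε => ?_
    set δ : ℝ := ε / (n + 1) with hδ
    have hδ0 : 0 < δ := by positivity
    have hex : ∀ i : Fin n, ∃ v : U, ‖v‖ ≤ 1 ∧ ‖g i‖ ≤ ‖g i v‖ + δ := by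
      intro i
      obtain ⟨v, hv1, hv2⟩ := (g i).exists_lt_apply_of_lt_opNorm
        (show ‖g i‖ - δ < ‖g i‖ by linarith)
      exact ⟨v, hv1.le, by linarith⟩
    choose u hu1 hu2 using hex
    -- signs for real parts
    have hex2 : ∀ i : Fin n, ∃ s : 𝕜, ‖s‖ = 1 ∧
        RCLike.re (g i (s • u i)) = |RCLike.re (g i (u i))| := by
      intro i
      rcases le_or_gt 0 (RCLike.re (g i (u i))) with h | h
      · exact ⟨1, by simp, by simp [abs_of_nonneg h]⟩
      · refine ⟨-1, by simp, ?_⟩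
        rw [(g i).map_smul, smul_eq_mul, neg_one_mul, map_neg, abs_of_neg h]
    have hex3 : ∀ i : Fin n, ∃ s : 𝕜, ‖s‖ = 1 ∧
        RCLike.im (g i (s • u i)) = |RCLike.im (g i (u i))| := by
      intro i
      rcases le_or_gt 0 (RCLike.im (g i (u i))) with h | h
      · exact ⟨1, by simp, by simp [abs_of_nonneg h]⟩
      · refine ⟨-1, by simp, ?_⟩
        rw [(g i).map_smul, smul_eq_mul, neg_one_mul, map_neg, abs_of_neg h]
    choose sr hsr1 hre using hex2
    choose si hsi1 him using hex3
    have hnorm_smul : ∀ (s : Fin n → 𝕜), (∀ i, ‖s i‖ = 1) → ∀ i, ‖s i • u i‖ ≤ 1 := by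
      intro s hs i
      rw [norm_smul, hs i, one_mul]
      exact hu1 i
    -- bound for the real parts
    have hre_sum : ∑ i : Fin n, |RCLike.re (g i (u i))| ≤ S := by
      set w : X := ∑ i : Fin n, (F (t i.succ) - F (t i.castSucc)) (sr i • u i) with hw
      have e1 : ∑ i : Fin n, |RCLike.re (g i (u i))| = RCLike.re (x' w) := by
        rw [hw, map_sum, map_sum]
        exact Finset.sum_congr rfl fun i _ => by rw [← hre i, hgapp]
      rw [e1]
      calc RCLike.re (x' w) ≤ ‖x' w‖ := RCLike.re_le_norm _
        _ ≤ ‖x'‖ * ‖w‖ := x'.le_opNorm w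
        _ ≤ 1 * ‖w‖ := mul_le_mul_of_nonneg_right hx' (norm_nonneg _)
        _ = ‖w‖ := one_mul _
        _ ≤ S := key _ (hnorm_smul sr hsr1)
    have him_sum : ∑ i : Fin n, |RCLike.im (g i (u i))| ≤ S := by
      set w : X := ∑ i : Fin n, (F (t i.succ) - F (t i.castSucc)) (si i • u i) with hw
      have e1 : ∑ i : Fin n, |RCLike.im (g i (u i))| = RCLike.im (x' w) := by
        rw [hw, map_sum, map_sum]
        exact Finset.sum_congr rfl fun i _ => by rw [← him i, hgapp]
      rw [e1]
      calc RCLike.im (x' w) ≤ ‖x' w‖ := RCLike.im_le_norm _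
        _ ≤ ‖x'‖ * ‖w‖ := x'.le_opNorm w
        _ ≤ 1 * ‖w‖ := mul_le_mul_of_nonneg_right hx' (norm_nonneg _)
        _ = ‖w‖ := one_mul _
        _ ≤ S := key _ (hnorm_smul si hsi1)
    have habs : ∀ i : Fin n, ‖g i (u i)‖
        ≤ |RCLike.re (g i (u i))| + |RCLike.im (g i (u i))| := by
      intro i
      set z : 𝕜 := g i (u i)
      calc ‖z‖ = ‖(RCLike.re z : 𝕜) + (RCLike.im z : 𝕜) * RCLike.I‖ := by
            rw [RCLike.re_add_im]
        _ ≤ ‖(RCLike.re z : 𝕜)‖ + ‖(RCLike.im z : 𝕜) * RCLike.I‖ := norm_add_le _ _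
        _ ≤ |RCLike.re z| + |RCLike.im z| := by
            rw [norm_mul, RCLike.norm_ofReal, RCLike.norm_ofReal]
            have : ‖(RCLike.I : 𝕜)‖ ≤ 1 := by
              rcases RCLike.I_eq_zero_or_im_I_eq_one (K := 𝕜) with h | h
              · simp [h]
              · rw [RCLike.norm_I_of_ne_zero]
                · intro h0; rw [h0] at h; simp at h
            nlinarith [abs_nonneg (RCLike.im z), norm_nonneg (RCLike.I : 𝕜)]
    have hnδ : (n : ℝ) * δ ≤ ε := by
      have h1 : (0 : ℝ) < n + 1 := by positivity
      rw [hδ, mul_div_assoc', div_le_iff₀ h1]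
      nlinarith [hε.le]
    calc ∑ i : Fin n, ‖g i‖ ≤ ∑ i : Fin n, (‖g i (u i)‖ + δ) :=
          Finset.sum_le_sum fun i _ => hu2 i
      _ = ∑ i : Fin n, ‖g i (u i)‖ + n * δ := by
          rw [Finset.sum_add_distrib]; simp [mul_comm]
      _ ≤ (∑ i : Fin n, (|RCLike.re (g i (u i))| + |RCLike.im (g i (u i))|)) + n * δ := by
          gcongr with i _; exact habs i
      _ = (∑ i : Fin n, |RCLike.re (g i (u i))|) + (∑ i : Fin n, |RCLike.im (g i (u i))|)
            + n * δ := by rw [Finset.sum_add_distrib]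
      _ ≤ S + S + ε := add_le_add (add_le_add hre_sum him_sum) hnδ
      _ = 2 * S + ε := by ring
  calc ∑ i : Fin n, (‖g i‖₊ : ℝ≥0∞) = ENNReal.ofReal (∑ i : Fin n, ‖g i‖) := by
        rw [ENNReal.ofReal_sum_of_nonneg (fun i _ => norm_nonneg _)]
        simp [enorm_eq_nnnorm]
    _ ≤ ENNReal.ofReal (2 * S) := ENNReal.ofReal_le_ofReal main
    _ = 2 * ENNReal.ofReal S := by
        rw [ENNReal.ofReal_mul (by norm_num)]; norm_num
    _ = 2 * semivariation τ F := by rw [hS, ENNReal.ofReal_toReal hSV]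
end

section
/- Let (T(t)) be a C₀-semigroup on a Banach space X with generator A, and let λ be in the resolvent set of A. If B : U → X₋₁ is a bounded operator such that the map F(t) := T(t) R(λ, A₋₁) B from [0,τ] to L(U,X) has bounded semivariation on [0,τ], then for every x' ∈ X' with ‖x'‖ ≤ 1 the scalar-side dual function t ↦ B' R(λ̄, A') T(t)' x' has bounded variation on [0,τ] with Var₀^τ ≤ 2 SV₀^τ(F). -/
open scoped ENNReal
open Filter

/-- let `(T(t))` be a `C₀`-semigroup on `X` with generator `A` and
`λ ∈ ρ(A)`.  The extrapolation space `X₋₁` is modelled by a Banach space `W`; the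
resolvent `R(λ, A₋₁)` is a bounded operator `R : W → X` and `B : U → W` is a control
operator.  If `F(t) := T(t) R(λ, A₋₁) B` has bounded semivariation on `[0,τ]`, then for
every `x' ∈ X'` with `‖x'‖ ≤ 1` the function `t ↦ B' R(λ̄, A') T(t)' x'
= x' ∘ T(t) ∘ R ∘ B` has bounded variation on `[0,τ]` with `Var₀^τ ≤ 2 SV₀^τ(F)`. -/
theorem variation_dual_resolvent_le {𝕜 U X W : Type*} [RCLike 𝕜]
    [NormedAddCommGroup U] [NormedSpace 𝕜 U] [CompleteSpace U]
    [NormedAddCommGroup X] [NormedSpace 𝕜 X] [CompleteSpace X]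
    [NormedAddCommGroup W] [NormedSpace 𝕜 W] [CompleteSpace W]
    (T : ℝ → (X →L[𝕜] X))
    (hT0 : T 0 = ContinuousLinearMap.id 𝕜 X)
    (hTadd : ∀ s t : ℝ, 0 ≤ s → 0 ≤ t → T (s + t) = (T s).comp (T t))
    (hTcont : ∀ x : X, ContinuousOn (fun t => T t x) (Set.Ici (0 : ℝ)))
    (R : W →L[𝕜] X) (B : U →L[𝕜] W) {τ : ℝ} (hτ : 0 < τ)
    (hSV : semivariation τ (fun t => ((T t).comp R).comp B) < ⊤) :
    ∀ x' : StrongDual 𝕜 X, ‖x'‖ ≤ 1 →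
      vecVariation τ (fun t => ((x'.comp (T t)).comp R).comp B) ≤
        2 * semivariation τ (fun t => ((T t).comp R).comp B) := by
  intro x' hx'
  set f : ℝ → (U →L[𝕜] X) := fun t => ((T t).comp R).comp B with hf
  have main : vecVariation τ (fun t => ((x'.comp (T t)).comp R).comp B) ≤
      semivariation τ f := by
    refine iSup_le fun n => iSup_le fun t => iSup_le fun ht => iSup_le fun ht0 =>
      iSup_le fun htl => ?_
    set φ : Fin n → (U →L[𝕜] 𝕜) := fun i =>
      ((x'.comp (T (t i.succ))).comp R).comp B -
        ((x'.comp (T (t i.castSucc))).comp R).comp B with hφ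
    have hφapp : ∀ (i : Fin n) (u : U),
        φ i u = x' ((f (t i.succ) - f (t i.castSucc)) u) := by
      intro i u
      simp [hφ, hf, ContinuousLinearMap.sub_apply]
    refine ENNReal.le_of_forall_pos_le_add fun ε hε hfin => ?_
    set δ : ℝ := (ε : ℝ) / (n + 1) with hδdef
    have hδ : 0 < δ := by positivity
    have hchoice : ∀ i : Fin n, ∃ u : U, ‖u‖ ≤ 1 ∧ ‖φ i‖ ≤ ‖φ i u‖ + δ := by
      intro i
      by_cases h : ‖φ i‖ ≤ δ
      · exact ⟨0, by simp, by simpa using h⟩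
      · have h' : ‖φ i‖ - δ < ‖φ i‖ := by linarith
        obtain ⟨u, hu1, hu2⟩ := (φ i).exists_lt_apply_of_lt_opNorm h'
        exact ⟨u, hu1.le, by linarith⟩
    choose u hu1 hu2 using hchoice
    have hc : ∀ i : Fin n, ∃ c : 𝕜, ‖c‖ ≤ 1 ∧ c * φ i (u i) = (‖φ i (u i)‖ : 𝕜) := by
      intro i
      by_cases h : φ i (u i) = 0
      · exact ⟨0, by simp, by simp [h]⟩
      · refine ⟨(‖φ i (u i)‖ : 𝕜) / φ i (u i), ?_, ?_⟩
        · rw [norm_div]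
          simp [norm_norm, div_le_one (norm_pos_iff.mpr h)]
        · field_simp
    choose c hc1 hc2 using hc
    set v : X := ∑ i : Fin n, (f (t i.succ) - f (t i.castSucc)) (c i • u i) with hv
    have hxv : x' v = ((∑ i : Fin n, ‖φ i (u i)‖ : ℝ) : 𝕜) := by
      have hcast : ((∑ i : Fin n, ‖φ i (u i)‖ : ℝ) : 𝕜)
          = ∑ i : Fin n, ((‖φ i (u i)‖ : ℝ) : 𝕜) := by push_cast; rfl
      rw [hv, map_sum, hcast]
      refine Finset.sum_congr rfl fun i _ => ?_
      rw [map_smul, map_smul, smul_eq_mul, ← hφapp, hc2]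
    have hsum_le : (∑ i : Fin n, ‖φ i (u i)‖) ≤ ‖v‖ := by
      have h1 : (∑ i : Fin n, ‖φ i (u i)‖) = ‖x' v‖ := by
        rw [hxv, RCLike.norm_ofReal, abs_of_nonneg]
        positivity
      rw [h1]
      calc ‖x' v‖ ≤ ‖x'‖ * ‖v‖ := x'.le_opNorm v
        _ ≤ 1 * ‖v‖ := by gcongr
        _ = ‖v‖ := one_mul _
    have hreal : (∑ i : Fin n, ‖φ i‖) ≤ ‖v‖ + ε := by
      calc (∑ i : Fin n, ‖φ i‖) ≤ ∑ i : Fin n, (‖φ i (u i)‖ + δ) :=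
            Finset.sum_le_sum fun i _ => hu2 i
        _ = (∑ i : Fin n, ‖φ i (u i)‖) + n * δ := by
            rw [Finset.sum_add_distrib]; simp [Finset.card_univ, mul_comm]
        _ ≤ ‖v‖ + ε := by
            have hnδ : (n : ℝ) * δ ≤ ε := by
              rw [hδdef]
              calc (n : ℝ) * ((ε : ℝ) / (n + 1)) ≤ ((n : ℝ) + 1) * ((ε : ℝ) / (n + 1)) := by
                    have : (0:ℝ) ≤ (ε : ℝ) / (n + 1) := by positivity
                    nlinarith
                _ = ε := by field_simp
            have := hsum_le
            linarith
    have hvSV : (‖v‖₊ : ℝ≥0∞) ≤ semivariation τ f := by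
      refine le_iSup_of_le n (le_iSup_of_le t (le_iSup_of_le ht (le_iSup_of_le ht0
        (le_iSup_of_le htl (le_iSup_of_le (fun i => c i • u i)
          (le_iSup_of_le (fun i => ?_) ?_))))))
      · rw [norm_smul]
        calc ‖c i‖ * ‖u i‖ ≤ 1 * 1 := by
              exact mul_le_mul (hc1 i) (hu1 i) (norm_nonneg _) zero_le_one
          _ = 1 := one_mul 1
      · exact le_refl _
    have hfinal : (∑ i : Fin n, ‖φ i‖₊) ≤ ‖v‖₊ + ε := by
      rw [← NNReal.coe_le_coe]
      push_cast
      simpa using hreal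
    have hstep : (∑ i : Fin n, (‖φ i‖₊ : ℝ≥0∞)) ≤ ((‖v‖₊ + ε : NNReal) : ℝ≥0∞) := by
      rw [← ENNReal.coe_finset_sum, ENNReal.coe_le_coe]
      exact hfinal
    refine hstep.trans ?_
    rw [ENNReal.coe_add]
    exact add_le_add_left hvSV _
  calc vecVariation τ (fun t => ((x'.comp (T t)).comp R).comp B)
      ≤ semivariation τ f := main
    _ ≤ 2 * semivariation τ f := le_mul_of_one_le_left (zero_le) (by norm_num)
end

section
/- Let X be a Banach space, (T(t)) a C₀-semigroup on X, and X^⊙ the sun-dual, i.e. the closed subspace of X' on which the adjoint semigroup (T(t)') is strongly continuous. Then X^⊙ is norming up to the constant M := limsup_{t↓0} ‖T(t)‖: for every x ∈ X, ‖x‖ ≤ M · sup{ |⟨x, x^⊙⟩| : x^⊙ ∈ X^⊙, ‖x^⊙‖ ≤ 1 }. -/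
open Filter Topology
open MeasureTheory


section Aux
variable {𝕜 X : Type*} [RCLike 𝕜] [NormedAddCommGroup X] [NormedSpace 𝕜 X] [CompleteSpace X]

/-- Local boundedness of the semigroup via Banach–Steinhaus. -/
lemma sd_loc_bdd (T : ℝ → (X →L[𝕜] X))
    (hTcont : ∀ x : X, ContinuousOn (fun t => T t x) (Set.Ici (0 : ℝ))) (b : ℝ) :
    ∃ C : ℝ, 0 ≤ C ∧ ∀ s ∈ Set.Icc (0:ℝ) b, ‖T s‖ ≤ C := by
  have h : ∀ z : X, ∃ C, ∀ i : Set.Icc (0:ℝ) b, ‖T i z‖ ≤ C := by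
    intro z
    obtain ⟨C, hC⟩ := (isCompact_Icc (a := (0:ℝ)) (b := b)).exists_bound_of_continuousOn
      ((hTcont z).mono Set.Icc_subset_Ici_self)
    exact ⟨C, fun i => hC i i.2⟩
  obtain ⟨C', hC'⟩ := banach_steinhaus (g := fun i : Set.Icc (0:ℝ) b => T i) h
  exact ⟨max C' 0, le_max_right _ _, fun s hs => le_trans (hC' ⟨s, hs⟩) (le_max_left _ _)⟩

lemma sd_integrable (T : ℝ → (X →L[𝕜] X))
    (hTcont : ∀ x : X, ContinuousOn (fun t => T t x) (Set.Ici (0 : ℝ)))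
    (x' : StrongDual 𝕜 X) (z : X) {a b : ℝ} (ha : 0 ≤ a) (hb : 0 ≤ b) :
    IntervalIntegrable (fun s => x' (T s z)) volume a b := by
  apply ContinuousOn.intervalIntegrable
  apply x'.continuous.comp_continuousOn ((hTcont z).mono ?_)
  intro s hs
  exact le_trans (le_min ha hb) hs.1

set_option linter.unusedSectionVars false

/-- The functional `z ↦ ∫₀ᵗ ⟨T(s)z, x'⟩ ds`. -/
noncomputable def sdJ (T : ℝ → (X →L[𝕜] X))
    (hTcont : ∀ x : X, ContinuousOn (fun t => T t x) (Set.Ici (0 : ℝ)))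
    (x' : StrongDual 𝕜 X) (t : ℝ) (ht : 0 ≤ t) : StrongDual 𝕜 X :=
  LinearMap.mkContinuousOfExistsBound
    { toFun := fun z => ∫ s in (0:ℝ)..t, x' (T s z)
      map_add' := by
        intro z w
        rw [← intervalIntegral.integral_add (sd_integrable T hTcont x' z le_rfl ht)
            (sd_integrable T hTcont x' w le_rfl ht)]
        simp
      map_smul' := by
        intro c z
        rw [RingHom.id_apply, ← intervalIntegral.integral_smul]
        simp }
    (by
      obtain ⟨C, hC0, hC⟩ := sd_loc_bdd T hTcont t
      refine ⟨‖x'‖ * C * t, fun z => ?_⟩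
      have h1 : ‖∫ s in (0:ℝ)..t, x' (T s z)‖ ≤ (‖x'‖ * C * ‖z‖) * |t - 0| := by
        apply intervalIntegral.norm_integral_le_of_norm_le_const
        intro s hs
        rw [Set.uIoc_of_le ht] at hs
        calc ‖x' (T s z)‖ ≤ ‖x'‖ * ‖T s z‖ := x'.le_opNorm _
          _ ≤ ‖x'‖ * (‖T s‖ * ‖z‖) := by
              exact mul_le_mul_of_nonneg_left ((T s).le_opNorm z) (norm_nonneg _)
          _ ≤ ‖x'‖ * (C * ‖z‖) := by
              have := hC s ⟨le_of_lt hs.1, hs.2⟩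
              gcongr
          _ = ‖x'‖ * C * ‖z‖ := by ring
      rw [sub_zero, abs_of_nonneg ht] at h1
      calc ‖∫ s in (0:ℝ)..t, x' (T s z)‖ ≤ ‖x'‖ * C * ‖z‖ * t := h1
        _ = ‖x'‖ * C * t * ‖z‖ := by ring)

lemma sdJ_apply (T : ℝ → (X →L[𝕜] X))
    (hTcont : ∀ x : X, ContinuousOn (fun t => T t x) (Set.Ici (0 : ℝ)))
    (x' : StrongDual 𝕜 X) (t : ℝ) (ht : 0 ≤ t) (z : X) :
    sdJ T hTcont x' t ht z = ∫ s in (0:ℝ)..t, x' (T s z) := rfl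

lemma sdJ_norm_le (T : ℝ → (X →L[𝕜] X))
    (hTcont : ∀ x : X, ContinuousOn (fun t => T t x) (Set.Ici (0 : ℝ)))
    (x' : StrongDual 𝕜 X) (t : ℝ) (ht : 0 ≤ t) (C : ℝ) (hC0 : 0 ≤ C)
    (hC : ∀ s ∈ Set.Ioc (0:ℝ) t, ‖T s‖ ≤ C) :
    ‖sdJ T hTcont x' t ht‖ ≤ ‖x'‖ * C * t := by
  apply ContinuousLinearMap.opNorm_le_bound _ (by positivity)
  intro z
  rw [sdJ_apply]
  have h1 : ‖∫ s in (0:ℝ)..t, x' (T s z)‖ ≤ (‖x'‖ * C * ‖z‖) * |t - 0| := by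
    apply intervalIntegral.norm_integral_le_of_norm_le_const
    intro s hs
    rw [Set.uIoc_of_le ht] at hs
    calc ‖x' (T s z)‖ ≤ ‖x'‖ * ‖T s z‖ := x'.le_opNorm _
      _ ≤ ‖x'‖ * (‖T s‖ * ‖z‖) := mul_le_mul_of_nonneg_left ((T s).le_opNorm z) (norm_nonneg _)
      _ ≤ ‖x'‖ * (C * ‖z‖) := by have := hC s hs; gcongr
      _ = ‖x'‖ * C * ‖z‖ := by ring
  rw [sub_zero, abs_of_nonneg ht] at h1
  calc ‖∫ s in (0:ℝ)..t, x' (T s z)‖ ≤ ‖x'‖ * C * ‖z‖ * t := h1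
    _ = ‖x'‖ * C * t * ‖z‖ := by ring

end Aux

lemma sdJ_tendsto {𝕜 X : Type*} [RCLike 𝕜] [NormedAddCommGroup X] [NormedSpace 𝕜 X]
    [CompleteSpace X] (T : ℝ → (X →L[𝕜] X))
    (hTadd : ∀ s t : ℝ, 0 ≤ s → 0 ≤ t → T (s + t) = (T s).comp (T t))
    (hTcont : ∀ x : X, ContinuousOn (fun t => T t x) (Set.Ici (0 : ℝ)))
    (x' : StrongDual 𝕜 X) (t : ℝ) (ht : 0 ≤ t) :
    Tendsto (fun h => (sdJ T hTcont x' t ht).comp (T h)) (𝓝[>] (0:ℝ))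
      (𝓝 (sdJ T hTcont x' t ht)) := by
  obtain ⟨C, hC0, hC⟩ := sd_loc_bdd T hTcont (t + 1)
  have key : ∀ h : ℝ, 0 < h → h ≤ 1 →
      ‖(sdJ T hTcont x' t ht).comp (T h) - sdJ T hTcont x' t ht‖ ≤ 2 * (‖x'‖ * C) * h := by
    intro h hh0 hh1
    apply ContinuousLinearMap.opNorm_le_bound _ (by positivity)
    intro z
    have hid : ((sdJ T hTcont x' t ht).comp (T h) - sdJ T hTcont x' t ht) z
        = (∫ s in t..(t+h), x' (T s z)) - ∫ s in (0:ℝ)..h, x' (T s z) := by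
      have e1 : (∫ s in (0:ℝ)..t, x' (T s (T h z))) = ∫ s in (0:ℝ)..t, x' (T (s + h) z) := by
        apply intervalIntegral.integral_congr
        intro s hs
        rw [Set.uIcc_of_le ht] at hs
        show x' (T s (T h z)) = x' (T (s + h) z)
        rw [hTadd s h hs.1 hh0.le]
        rfl
      have e2 : (∫ s in (0:ℝ)..t, x' (T (s + h) z)) = ∫ s in (0+h)..(t+h), x' (T s z) :=
        intervalIntegral.integral_comp_add_right (fun u => x' (T u z)) h
      have i1 : IntervalIntegrable (fun s => x' (T s z)) volume 0 h :=
        sd_integrable T hTcont x' z le_rfl hh0.le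
      have i2 : IntervalIntegrable (fun s => x' (T s z)) volume h t :=
        sd_integrable T hTcont x' z hh0.le ht
      have i3 : IntervalIntegrable (fun s => x' (T s z)) volume t (t+h) :=
        sd_integrable T hTcont x' z ht (by linarith)
      have a1 := intervalIntegral.integral_add_adjacent_intervals i1 i2
      have a4 := intervalIntegral.integral_add_adjacent_intervals i2 i3
      show sdJ T hTcont x' t ht (T h z) - sdJ T hTcont x' t ht z
        = (∫ s in t..(t+h), x' (T s z)) - ∫ s in (0:ℝ)..h, x' (T s z)
      rw [sdJ_apply, sdJ_apply, e1, e2, zero_add]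
      linear_combination a1 - a4
    rw [hid]
    have b1 : ‖∫ s in t..(t+h), x' (T s z)‖ ≤ (‖x'‖ * C * ‖z‖) * |t + h - t| := by
      apply intervalIntegral.norm_integral_le_of_norm_le_const
      intro s hs
      rw [Set.uIoc_of_le (by linarith)] at hs
      have hs' : s ∈ Set.Icc (0:ℝ) (t+1) := ⟨by linarith [hs.1], by linarith [hs.2]⟩
      calc ‖x' (T s z)‖ ≤ ‖x'‖ * ‖T s z‖ := x'.le_opNorm _
        _ ≤ ‖x'‖ * (‖T s‖ * ‖z‖) := mul_le_mul_of_nonneg_left ((T s).le_opNorm z) (norm_nonneg _)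
        _ ≤ ‖x'‖ * (C * ‖z‖) := by have := hC s hs'; gcongr
        _ = ‖x'‖ * C * ‖z‖ := by ring
    have b2 : ‖∫ s in (0:ℝ)..h, x' (T s z)‖ ≤ (‖x'‖ * C * ‖z‖) * |h - 0| := by
      apply intervalIntegral.norm_integral_le_of_norm_le_const
      intro s hs
      rw [Set.uIoc_of_le hh0.le] at hs
      have hs' : s ∈ Set.Icc (0:ℝ) (t+1) := ⟨hs.1.le, by linarith [hs.2]⟩
      calc ‖x' (T s z)‖ ≤ ‖x'‖ * ‖T s z‖ := x'.le_opNorm _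
        _ ≤ ‖x'‖ * (‖T s‖ * ‖z‖) := mul_le_mul_of_nonneg_left ((T s).le_opNorm z) (norm_nonneg _)
        _ ≤ ‖x'‖ * (C * ‖z‖) := by have := hC s hs'; gcongr
        _ = ‖x'‖ * C * ‖z‖ := by ring
    rw [add_sub_cancel_left, abs_of_nonneg hh0.le] at b1
    rw [sub_zero, abs_of_nonneg hh0.le] at b2
    calc ‖(∫ s in t..(t+h), x' (T s z)) - ∫ s in (0:ℝ)..h, x' (T s z)‖
        ≤ ‖∫ s in t..(t+h), x' (T s z)‖ + ‖∫ s in (0:ℝ)..h, x' (T s z)‖ := norm_sub_le _ _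
      _ ≤ ‖x'‖ * C * ‖z‖ * h + ‖x'‖ * C * ‖z‖ * h := add_le_add b1 b2
      _ = 2 * (‖x'‖ * C) * h * ‖z‖ := by ring
  apply tendsto_iff_norm_sub_tendsto_zero.mpr
  apply squeeze_zero_norm' (a := fun h : ℝ => 2 * (‖x'‖ * C) * h)
  · filter_upwards [Ioc_mem_nhdsGT_of_mem (Set.mem_Ico.mpr ⟨le_refl (0:ℝ), zero_lt_one⟩)]
      with h hh
    rw [norm_norm]
    exact key h hh.1 hh.2
  · have : Tendsto (fun h : ℝ => 2 * (‖x'‖ * C) * h) (𝓝 0) (𝓝 (2 * (‖x'‖ * C) * 0)) :=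
      (continuous_const.mul continuous_id).tendsto 0
    rw [mul_zero] at this
    exact this.mono_left nhdsWithin_le_nhds

lemma sd_avg_tendsto {E : Type*} [NormedAddCommGroup E] [NormedSpace ℝ E] [CompleteSpace E]
    (f : ℝ → E) (hf : ContinuousOn f (Set.Ici (0:ℝ))) :
    Tendsto (fun t => (t⁻¹ : ℝ) • ∫ s in (0:ℝ)..t, f s) (𝓝[>] (0:ℝ)) (𝓝 (f 0)) := by
  rw [Metric.tendsto_nhdsWithin_nhds]
  intro ε hε
  have hc : ContinuousWithinAt f (Set.Ici (0:ℝ)) 0 := hf 0 Set.self_mem_Ici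
  rw [Metric.continuousWithinAt_iff] at hc
  obtain ⟨δ, hδ0, hδ⟩ := hc (ε/2) (by linarith)
  refine ⟨δ, hδ0, ?_⟩
  intro t ht htδ
  have ht0 : 0 < t := ht
  have htδ' : t < δ := by rwa [Real.dist_eq, sub_zero, abs_of_pos ht0] at htδ
  have hint : IntervalIntegrable f volume 0 t :=
    ContinuousOn.intervalIntegrable (hf.mono (by
      rw [Set.uIcc_of_le ht0.le]; exact fun s hs => hs.1))
  have e1 : (t⁻¹ : ℝ) • (∫ s in (0:ℝ)..t, f s) - f 0
      = (t⁻¹ : ℝ) • ∫ s in (0:ℝ)..t, (f s - f 0) := by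
    rw [intervalIntegral.integral_sub hint intervalIntegrable_const,
      intervalIntegral.integral_const, smul_sub, sub_zero, smul_smul,
      inv_mul_cancel₀ ht0.ne', one_smul]
  have e2 : ‖∫ s in (0:ℝ)..t, (f s - f 0)‖ ≤ (ε/2) * |t - 0| := by
    apply intervalIntegral.norm_integral_le_of_norm_le_const
    intro s hs
    rw [Set.uIoc_of_le ht0.le] at hs
    have hsd : dist s 0 < δ := by
      rw [Real.dist_eq, sub_zero, abs_of_pos hs.1]
      linarith [hs.2]
    have h1 := hδ hs.1.le hsd
    rw [dist_eq_norm] at h1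
    exact h1.le
  rw [dist_eq_norm, e1]
  rw [sub_zero, abs_of_pos ht0] at e2
  calc ‖(t⁻¹ : ℝ) • ∫ s in (0:ℝ)..t, (f s - f 0)‖
      = |t⁻¹| * ‖∫ s in (0:ℝ)..t, (f s - f 0)‖ := by
        rw [norm_smul, Real.norm_eq_abs]
    _ ≤ t⁻¹ * ((ε/2) * t) := by
        rw [abs_of_pos (inv_pos.mpr ht0)]
        exact mul_le_mul_of_nonneg_left e2 (inv_pos.mpr ht0).le
    _ = ε/2 := by field_simp
    _ < ε := by linarith

/-- the sun-dual `X^⊙` (the subspace of `X'` on which the adjoint semigroup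
is strongly continuous) is norming up to the constant `M := limsup_{t↓0} ‖T(t)‖`:
for every `x ∈ X`, `‖x‖ ≤ M · sup{ |⟨x, x^⊙⟩| : x^⊙ ∈ X^⊙, ‖x^⊙‖ ≤ 1 }`. -/
theorem sunDual_norming {𝕜 X : Type*} [RCLike 𝕜] [NormedAddCommGroup X]
    [NormedSpace 𝕜 X] [CompleteSpace X]
    (T : ℝ → (X →L[𝕜] X))
    (hT0 : T 0 = ContinuousLinearMap.id 𝕜 X)
    (hTadd : ∀ s t : ℝ, 0 ≤ s → 0 ≤ t → T (s + t) = (T s).comp (T t))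
    (hTcont : ∀ x : X, ContinuousOn (fun t => T t x) (Set.Ici (0 : ℝ))) :
    ∀ x : X,
      ‖x‖ ≤ (limsup (fun t => ‖T t‖) (𝓝[>] (0 : ℝ))) *
        sSup {r : ℝ | ∃ x' : StrongDual 𝕜 X,
          (Tendsto (fun t => x'.comp (T t)) (𝓝[>] (0 : ℝ)) (𝓝 x')) ∧
          ‖x'‖ ≤ 1 ∧ r = ‖x' x‖} := by
  intro x
  set M := limsup (fun t => ‖T t‖) (𝓝[>] (0:ℝ)) with hMdef
  set S := {r : ℝ | ∃ x' : StrongDual 𝕜 X,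
          (Tendsto (fun t => x'.comp (T t)) (𝓝[>] (0 : ℝ)) (𝓝 x')) ∧
          ‖x'‖ ≤ 1 ∧ r = ‖x' x‖} with hSdef
  obtain ⟨C₁, hC₁0, hC₁⟩ := sd_loc_bdd T hTcont 1
  have hbdd : IsBoundedUnder (· ≤ ·) (𝓝[>] (0:ℝ)) (fun t => ‖T t‖) := by
    refine ⟨C₁, eventually_map.mpr ?_⟩
    filter_upwards [Ioc_mem_nhdsGT_of_mem (Set.mem_Ico.mpr ⟨le_refl (0:ℝ), zero_lt_one⟩)]
      with t htm
    exact hC₁ t ⟨htm.1.le, htm.2⟩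
  have hM0 : 0 ≤ M :=
    le_limsup_of_frequently_le ((Eventually.of_forall fun t => norm_nonneg _).frequently) hbdd
  have hSbdd : BddAbove S := by
    refine ⟨‖x‖, fun r hr => ?_⟩
    obtain ⟨x', _, hx1, hrr⟩ := hr
    rw [hrr]
    calc ‖x' x‖ ≤ ‖x'‖ * ‖x‖ := x'.le_opNorm x
      _ ≤ 1 * ‖x‖ := mul_le_mul_of_nonneg_right hx1 (norm_nonneg x)
      _ = ‖x‖ := one_mul _
  have hS0 : (0:ℝ) ∈ S := by
    refine ⟨0, ?_, by simp, by simp⟩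
    simp only [ContinuousLinearMap.zero_comp]
    exact tendsto_const_nhds
  have hSsup0 : 0 ≤ sSup S := le_csSup hSbdd hS0
  by_cases hx : x = 0
  · rw [hx, norm_zero]
    exact mul_nonneg hM0 hSsup0
  obtain ⟨x', hx'1, hx'x⟩ := exists_dual_vector 𝕜 x (norm_ne_zero_iff.mpr hx)
  have hnormxx : ‖x' x‖ = ‖x‖ := by
    rw [hx'x, RCLike.norm_ofReal, abs_of_nonneg (norm_nonneg x)]
  have key : ∀ ε > (0:ℝ), ‖x‖ - ε ≤ (M + ε) * sSup S := by
    intro ε hε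
    have hMε : 0 < M + ε := by linarith
    have h1 : ∀ᶠ t in 𝓝[>] (0:ℝ), ‖T t‖ < M + ε :=
      eventually_lt_of_limsup_lt (by rw [← hMdef]; linarith) hbdd
    have h2 : Tendsto (fun t => (t⁻¹:ℝ) • ∫ s in (0:ℝ)..t, x' (T s x)) (𝓝[>] (0:ℝ))
        (𝓝 (x' x)) := by
      have hc : ContinuousOn (fun s => x' (T s x)) (Set.Ici (0:ℝ)) :=
        x'.continuous.comp_continuousOn (hTcont x)
      have h := sd_avg_tendsto (fun s => x' (T s x)) hc
      have h0 : (fun s => x' (T s x)) 0 = x' x := by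
        show x' (T 0 x) = x' x
        rw [hT0]; rfl
      rw [show x' (T 0 x) = x' x from h0] at h; exact h
    have h2' : ∀ᶠ t in 𝓝[>] (0:ℝ),
        ‖(t⁻¹:ℝ) • (∫ s in (0:ℝ)..t, x' (T s x)) - x' x‖ < ε := by
      have := Metric.tendsto_nhds.mp h2 ε hε
      filter_upwards [this] with t htm
      rwa [dist_eq_norm] at htm
    obtain ⟨u, hu, hu_sub⟩ := mem_nhdsGT_iff_exists_Ioo_subset.mp (h1.and h2')
    have hu0 : (0:ℝ) < u := hu
    set t := u / 2 with htdef
    have ht0 : 0 < t := by positivity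
    have htu : t < u := by simp only [htdef]; linarith
    have hTbd : ∀ s ∈ Set.Ioc (0:ℝ) t, ‖T s‖ ≤ M + ε :=
      fun s hs => (hu_sub ⟨hs.1, lt_of_le_of_lt hs.2 htu⟩).1.le
    have havg : ‖(t⁻¹:ℝ) • (∫ s in (0:ℝ)..t, x' (T s x)) - x' x‖ < ε :=
      (hu_sub ⟨ht0, htu⟩).2
    set y := sdJ T hTcont x' t ht0.le with hydef
    have hynorm : ‖y‖ ≤ (M+ε) * t := by
      have := sdJ_norm_le T hTcont x' t ht0.le (M+ε) hMε.le hTbd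
      rwa [hx'1, one_mul] at this
    set c : ℝ := t⁻¹ * (M+ε)⁻¹ with hcdef
    have hc0 : 0 < c := by positivity
    set z' : StrongDual 𝕜 X := c • y with hz'def
    have hz'norm : ‖z'‖ ≤ 1 := by
      rw [hz'def, norm_smul, Real.norm_eq_abs, abs_of_pos hc0]
      calc c * ‖y‖ ≤ c * ((M+ε) * t) := mul_le_mul_of_nonneg_left hynorm hc0.le
        _ = 1 := by rw [hcdef]; field_simp
    have hz'tend : Tendsto (fun h => z'.comp (T h)) (𝓝[>] (0:ℝ)) (𝓝 z') := by
      simp only [hz'def, ContinuousLinearMap.smul_comp]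
      exact (sdJ_tendsto T hTadd hTcont x' t ht0.le).const_smul c
    have hmem : ‖z' x‖ ∈ S := ⟨z', hz'tend, hz'norm, rfl⟩
    have hle : ‖z' x‖ ≤ sSup S := le_csSup hSbdd hmem
    have hval : ‖z' x‖ = (M+ε)⁻¹ * ‖(t⁻¹:ℝ) • (∫ s in (0:ℝ)..t, x' (T s x))‖ := by
      have e : z' x = ((M+ε)⁻¹:ℝ) • ((t⁻¹:ℝ) • (∫ s in (0:ℝ)..t, x' (T s x))) := by
        rw [hz'def, ContinuousLinearMap.smul_apply, hydef, sdJ_apply, hcdef,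
          smul_smul, mul_comm]
      rw [e, norm_smul, Real.norm_eq_abs, abs_of_pos (inv_pos.mpr hMε)]
    have hlow : ‖x‖ - ε ≤ ‖(t⁻¹:ℝ) • (∫ s in (0:ℝ)..t, x' (T s x))‖ := by
      have h4 : ‖x' x‖ - ‖(t⁻¹:ℝ) • (∫ s in (0:ℝ)..t, x' (T s x))‖
          ≤ ‖(t⁻¹:ℝ) • (∫ s in (0:ℝ)..t, x' (T s x)) - x' x‖ := by
        rw [norm_sub_rev]
        exact norm_sub_norm_le _ _
      rw [hnormxx] at h4
      linarith
    have hfin : (M+ε)⁻¹ * (‖x‖ - ε) ≤ sSup S := by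
      refine le_trans ?_ hle
      rw [hval]
      exact mul_le_mul_of_nonneg_left hlow (inv_pos.mpr hMε).le
    have := mul_le_mul_of_nonneg_left hfin hMε.le
    calc ‖x‖ - ε = (M+ε) * ((M+ε)⁻¹ * (‖x‖ - ε)) := by field_simp
      _ ≤ (M+ε) * sSup S := this
  have hSle : sSup S ≤ ‖x‖ := by
    refine csSup_le ⟨0, hS0⟩ fun r hr => ?_
    obtain ⟨w', _, hw1, hrr⟩ := hr
    rw [hrr]
    calc ‖w' x‖ ≤ ‖w'‖ * ‖x‖ := w'.le_opNorm x
      _ ≤ 1 * ‖x‖ := mul_le_mul_of_nonneg_right hw1 (norm_nonneg x)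
      _ = ‖x‖ := one_mul _
  refine le_of_forall_pos_le_add ?_
  intro ε hε
  have hd : 0 < ‖x‖ + 1 := by positivity
  have hε' : 0 < ε / (‖x‖ + 1) := by positivity
  have hk := key (ε / (‖x‖ + 1)) hε'
  have h5 : (M + ε / (‖x‖ + 1)) * sSup S ≤ M * sSup S + (ε / (‖x‖ + 1)) * ‖x‖ := by
    rw [add_mul]
    have : (ε / (‖x‖ + 1)) * sSup S ≤ (ε / (‖x‖ + 1)) * ‖x‖ :=
      mul_le_mul_of_nonneg_left hSle hε'.le
    linarith
  have h6 : (ε / (‖x‖ + 1)) * ‖x‖ + (ε / (‖x‖ + 1)) = ε := by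
    field_simp
  linarith
end

section
/- Let Y be a Banach space, p, q ∈ [1,∞] Hölder conjugates with q < ∞, and g ∈ L^q([0,τ], Y'). Then ‖g‖_{L^q} = sup{ |∫₀^τ ⟨u(t), g(t)⟩ dt| : u ∈ L^p([0,τ], Y), ‖u‖_{L^p} ≤ 1 } (the norming property of vector-valued L^p duality). -/
open MeasureTheory
open scoped ENNReal

lemma Lp_dual_norming_exists_norming {𝕜 Y : Type*} [RCLike 𝕜] [NormedAddCommGroup Y]
    [NormedSpace 𝕜 Y] (c : StrongDual 𝕜 Y) {δ : ℝ} (hδ : 0 < δ) (hδ1 : δ < 1) :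
    ∃ y : Y, ‖y‖ ≤ 1 ∧ c y = ((‖c y‖ : ℝ) : 𝕜) ∧ (1 - δ) * ‖c‖ ≤ ‖c y‖ := by
  by_cases hc : c = 0
  · exact ⟨0, by simp [hc]⟩
  · have hcpos : 0 < ‖c‖ := norm_pos_iff.mpr hc
    have hlt : (1 - δ) * ‖c‖ < ‖c‖ := by nlinarith
    obtain ⟨y, hy1, hy2⟩ := c.exists_lt_apply_of_lt_opNorm hlt
    have hay : 0 < ‖c y‖ :=
      lt_of_le_of_lt (mul_nonneg (by linarith) (norm_nonneg _)) hy2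
    set a : 𝕜 := c y with ha_def
    have h1 : c (((starRingEnd 𝕜) a / (‖a‖ : 𝕜)) • y) = ((‖a‖ : ℝ) : 𝕜) := by
      rw [_root_.map_smul, smul_eq_mul, ← ha_def, div_mul_eq_mul_div, RCLike.conj_mul]
      rw [show ((‖a‖ : ℝ) : 𝕜) ^ 2 = ((‖a‖ : ℝ) : 𝕜) * ((‖a‖ : ℝ) : 𝕜) by ring]
      rw [mul_div_assoc, div_self (by simpa using hay.ne'), mul_one]
    refine ⟨((starRingEnd 𝕜) a / (‖a‖ : 𝕜)) • y, ?_, ?_, ?_⟩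
    · rw [norm_smul, norm_div, RCLike.norm_conj, RCLike.norm_ofReal,
        abs_of_pos hay, div_self hay.ne']
      simpa using hy1.le
    · rw [h1, RCLike.norm_ofReal, abs_of_pos hay]
    · rw [h1, RCLike.norm_ofReal, abs_of_pos hay]
      exact hy2.le

lemma Lp_dual_norming_pairing_memL1 {α : Type*} [MeasurableSpace α] {μ : Measure α}
    {𝕜 Y : Type*} [RCLike 𝕜] [NormedAddCommGroup Y] [NormedSpace 𝕜 Y]
    {p q : ℝ≥0∞} (hpq : p⁻¹ + q⁻¹ = 1)
    {g : α → StrongDual 𝕜 Y} {u : α → Y} (hg : MemLp g q μ) (hu : MemLp u p μ) :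
    Integrable (fun t => (g t) (u t)) μ ∧
      ‖∫ t, (g t) (u t) ∂μ‖ ≤ (eLpNorm g q μ).toReal * (eLpNorm u p μ).toReal := by
  have hmeas : AEStronglyMeasurable (fun t => (g t) (u t)) μ :=
    isBoundedBilinearMap_apply.continuous.comp_aestronglyMeasurable
      (hg.aestronglyMeasurable.prodMk hu.aestronglyMeasurable)
  have hpqr : 1 / (1 : ℝ≥0∞) = 1 / q + 1 / p := by
    simp only [one_div]
    rw [inv_one, ← hpq, add_comm]
  have hholder : eLpNorm (fun t => (g t) (u t)) 1 μ ≤ eLpNorm g q μ * eLpNorm u p μ :=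
    by
    haveI : ENNReal.HolderTriple q p 1 := ⟨by simpa only [one_div] using hpqr.symm⟩
    simpa using eLpNorm_le_eLpNorm_mul_eLpNorm'_of_norm hg.aestronglyMeasurable hu.aestronglyMeasurable
      (fun c y => c y) 1 (Filter.Eventually.of_forall fun t => by simpa using (g t).le_opNorm (u t))
  have hfin : eLpNorm g q μ * eLpNorm u p μ < ∞ :=
    ENNReal.mul_lt_top hg.eLpNorm_lt_top hu.eLpNorm_lt_top
  have hint : Integrable (fun t => (g t) (u t)) μ :=
    memLp_one_iff_integrable.mp ⟨hmeas, lt_of_le_of_lt hholder hfin⟩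
  refine ⟨hint, ?_⟩
  calc ‖∫ t, (g t) (u t) ∂μ‖ ≤ ∫ t, ‖(g t) (u t)‖ ∂μ := norm_integral_le_integral_norm _
    _ = (eLpNorm (fun t => (g t) (u t)) 1 μ).toReal := by
        rw [integral_norm_eq_lintegral_enorm hmeas, eLpNorm_one_eq_lintegral_enorm]
    _ ≤ (eLpNorm g q μ * eLpNorm u p μ).toReal := ENNReal.toReal_mono hfin.ne hholder
    _ = (eLpNorm g q μ).toReal * (eLpNorm u p μ).toReal := ENNReal.toReal_mul

lemma Lp_dual_norming_simpleFunc {α : Type*} [MeasurableSpace α] {μ : Measure α}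
    [IsFiniteMeasure μ]
    {𝕜 Y : Type*} [RCLike 𝕜] [NormedAddCommGroup Y] [NormedSpace 𝕜 Y]
    {p q : ℝ≥0∞} (hpq : p⁻¹ + q⁻¹ = 1) (hq : q ≠ ⊤)
    (s : SimpleFunc α (StrongDual 𝕜 Y)) {δ : ℝ} (hδ : 0 < δ) (hδ1 : δ < 1) :
    ∃ u : α → Y, MemLp u p μ ∧ eLpNorm u p μ ≤ 1 ∧
      (1 - δ) * (eLpNorm (⇑s) q μ).toReal ≤ ‖∫ t, (s t) (u t) ∂μ‖ := by
  -- basic exponent facts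
  have hq0 : q ≠ 0 := by
    intro h
    rw [h] at hpq
    simp at hpq
  have hq1 : 1 ≤ q := ENNReal.inv_le_one.mp (hpq ▸ le_add_self)
  set q' : ℝ := q.toReal with hq'def
  have hq'1 : 1 ≤ q' := by
    have := ENNReal.toReal_mono hq hq1
    simpa using this
  have hq'pos : 0 < q' := lt_of_lt_of_le one_pos hq'1
  -- the norming selection
  choose φ hφ1 hφ2 hφ3 using fun c : StrongDual 𝕜 Y =>
    Lp_dual_norming_exists_norming c hδ hδ1
  set ψ : StrongDual 𝕜 Y → Y := fun c => ((‖c‖ ^ (q' - 1) : ℝ) : 𝕜) • φ c with hψdef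
  set χ : StrongDual 𝕜 Y → ℝ := fun c => ‖c‖ ^ (q' - 1) * ‖c (φ c)‖ with hχdef
  have hv_mem : ∀ r : ℝ≥0∞, MemLp (⇑(s.map ψ)) r μ := fun r =>
    ((s.map ψ).memLp_top μ).mono_exponent le_top
  have hint : ∀ θ : StrongDual 𝕜 Y → ℝ, Integrable (fun t => θ (s t)) μ := fun θ =>
    memLp_one_iff_integrable.mp
      (((s.map θ).memLp_top μ).mono_exponent le_top)
  have hpair : ∀ c : StrongDual 𝕜 Y, c (ψ c) = ((χ c : ℝ) : 𝕜) := by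
    intro c
    rw [hψdef]
    simp only
    rw [_root_.map_smul, smul_eq_mul, hφ2 c, ← RCLike.ofReal_mul]
  have hψnorm : ∀ c : StrongDual 𝕜 Y, ‖ψ c‖ ≤ ‖c‖ ^ (q' - 1) := by
    intro c
    rw [hψdef]
    simp only
    rw [norm_smul, RCLike.norm_ofReal, abs_of_nonneg (Real.rpow_nonneg (norm_nonneg c) _)]
    calc ‖c‖ ^ (q' - 1) * ‖φ c‖ ≤ ‖c‖ ^ (q' - 1) * 1 :=
          mul_le_mul_of_nonneg_left (hφ1 c) (Real.rpow_nonneg (norm_nonneg c) _)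
      _ = ‖c‖ ^ (q' - 1) := mul_one _
  have hnorm_pow : ∀ c : StrongDual 𝕜 Y, ‖c‖ ^ (q' - 1) * ‖c‖ = ‖c‖ ^ q' := by
    intro c
    by_cases hc : c = 0
    · simp [hc, Real.zero_rpow hq'pos.ne']
    · have hcpos : ‖c‖ ≠ 0 := norm_ne_zero_iff.mpr hc
      rw [← Real.rpow_add_one hcpos (q' - 1), sub_add_cancel]
  have hχ_low : ∀ c : StrongDual 𝕜 Y, (1 - δ) * ‖c‖ ^ q' ≤ χ c := by
    intro c
    calc (1 - δ) * ‖c‖ ^ q' = ‖c‖ ^ (q' - 1) * ((1 - δ) * ‖c‖) := by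
          rw [← hnorm_pow c]; ring
      _ ≤ ‖c‖ ^ (q' - 1) * ‖c (φ c)‖ :=
          mul_le_mul_of_nonneg_left (hφ3 c) (Real.rpow_nonneg (norm_nonneg c) _)
      _ = χ c := rfl
  set I : ℝ := ∫ t, ‖s t‖ ^ q' ∂μ with hIdef
  have hI_nonneg : 0 ≤ I :=
    integral_nonneg fun t => Real.rpow_nonneg (norm_nonneg _) _
  have h_int_low : (1 - δ) * I ≤ ∫ t, χ (s t) ∂μ := by
    rw [hIdef, ← integral_const_mul]
    exact integral_mono (hint fun c => (1 - δ) * ‖c‖ ^ q') (hint χ)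
      (fun t => hχ_low (s t))
  have hs_memq : MemLp (⇑s) q μ := (s.memLp_top μ).mono_exponent le_top
  have h_eLp : (eLpNorm (⇑s) q μ).toReal = I ^ q'⁻¹ := by
    rw [hs_memq.eLpNorm_eq_integral_rpow_norm hq0 hq,
      ENNReal.toReal_ofReal (Real.rpow_nonneg (integral_nonneg fun t =>
        Real.rpow_nonneg (norm_nonneg _) _) _)]
  rw [h_eLp]
  by_cases hI0 : I = 0
  · refine ⟨0, MemLp.zero, by simp, ?_⟩
    rw [hI0, Real.zero_rpow (by positivity : q'⁻¹ ≠ 0)]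
    simp
  have hIpos : 0 < I := lt_of_le_of_ne hI_nonneg (Ne.symm hI0)
  by_cases hq_one : q = 1
  -- case q = 1, p = ∞
  · have hp_top : p = ∞ := by
      rw [hq_one] at hpq
      simp only [inv_one] at hpq
      have : p⁻¹ = 0 := by
        have h0 : p⁻¹ + 1 = 0 + 1 := by rw [hpq, zero_add]
        exact (ENNReal.add_left_inj (by simp)).mp h0
      exact ENNReal.inv_eq_zero.mp this
    have hq' : q' = 1 := by rw [hq'def, hq_one]; exact ENNReal.toReal_one
    refine ⟨⇑(s.map ψ), hv_mem p, ?_, ?_⟩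
    · rw [hp_top, eLpNorm_exponent_top]
      refine (eLpNormEssSup_le_of_ae_bound (C := 1) (Filter.Eventually.of_forall fun t => ?_)).trans
        (by simp)
      have : (s.map ψ) t = ψ (s t) := rfl
      rw [this]
      calc ‖ψ (s t)‖ ≤ ‖s t‖ ^ (q' - 1) := hψnorm (s t)
        _ = 1 := by rw [hq', sub_self, Real.rpow_zero]
    · have hcalc : ∫ t, (s t) ((s.map ψ) t) ∂μ = ((∫ t, χ (s t) ∂μ : ℝ) : 𝕜) := by
        have : ∀ t, (s t) ((s.map ψ) t) = ((χ (s t) : ℝ) : 𝕜) := fun t => hpair (s t)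
        simp only [this]
        exact integral_ofReal
      rw [hcalc, RCLike.norm_ofReal]
      calc (1 - δ) * I ^ q'⁻¹ = (1 - δ) * I := by rw [hq', inv_one, Real.rpow_one]
        _ ≤ ∫ t, χ (s t) ∂μ := h_int_low
        _ ≤ |∫ t, χ (s t) ∂μ| := le_abs_self _
  -- case 1 < q, p < ∞
  · have hq_lt : 1 < q := lt_of_le_of_ne hq1 (Ne.symm hq_one)
    have hp_ne_top : p ≠ ∞ := by
      intro h
      rw [h] at hpq
      simp only [ENNReal.inv_top, zero_add] at hpq
      exact hq_one (by simpa using congrArg (·⁻¹) hpq)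
    have hp0 : p ≠ 0 := by
      intro h
      rw [h] at hpq
      simp at hpq
    set p' : ℝ := p.toReal with hp'def
    have hp'pos : 0 < p' := ENNReal.toReal_pos hp0 hp_ne_top
    have hreal : p'⁻¹ + q'⁻¹ = 1 := by
      have := congrArg ENNReal.toReal hpq
      rwa [ENNReal.toReal_add (by simp [hp0]) (by simp [hq0]), ENNReal.toReal_inv,
        ENNReal.toReal_inv, ENNReal.toReal_one] at this
    have hq'gt : 1 < q' := by
      have := (ENNReal.toReal_lt_toReal (by simp) hq).mpr hq_lt
      simpa using this
    have hkey : (q' - 1) * p' = q' := by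
      have hsum : q' + p' = p' * q' := by
        field_simp at hreal
        linarith [hreal]
      linarith [hsum, mul_comm p' q']
    set κ : ℝ := I ^ (-p'⁻¹) with hκdef
    have hκpos : 0 < κ := Real.rpow_pos_of_pos hIpos _
    set u : α → Y := ((κ : 𝕜) : 𝕜) • (⇑(s.map ψ)) with hudef
    have hu_apply : ∀ t, u t = ((κ : ℝ) : 𝕜) • ψ (s t) := fun t => rfl
    have hu_mem : MemLp u p μ := (hv_mem p).const_smul ((κ : ℝ) : 𝕜)
    -- norm bound of u pointwise
    have hu_norm : ∀ t, ‖u t‖ ≤ κ * ‖s t‖ ^ (q' - 1) := by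
      intro t
      rw [hu_apply t, norm_smul, RCLike.norm_ofReal, abs_of_pos hκpos]
      exact mul_le_mul_of_nonneg_left (hψnorm (s t)) hκpos.le
    -- the integral of ‖u‖^p' is at most 1
    have hκp : κ ^ p' = I⁻¹ := by
      rw [hκdef, ← Real.rpow_mul hI_nonneg, neg_mul, inv_mul_cancel₀ hp'pos.ne',
        Real.rpow_neg_one]
    have hu_int_le : ∫ t, ‖u t‖ ^ p' ∂μ ≤ 1 := by
      have hpt : ∀ t, ‖u t‖ ^ p' ≤ κ ^ p' * ‖s t‖ ^ q' := by
        intro t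
        calc ‖u t‖ ^ p' ≤ (κ * ‖s t‖ ^ (q' - 1)) ^ p' :=
              Real.rpow_le_rpow (norm_nonneg _) (hu_norm t) hp'pos.le
          _ = κ ^ p' * (‖s t‖ ^ (q' - 1)) ^ p' :=
              Real.mul_rpow hκpos.le (Real.rpow_nonneg (norm_nonneg _) _)
          _ = κ ^ p' * ‖s t‖ ^ ((q' - 1) * p') := by
              rw [← Real.rpow_mul (norm_nonneg _)]
          _ = κ ^ p' * ‖s t‖ ^ q' := by rw [hkey]
      have hmono : ∫ t, ‖u t‖ ^ p' ∂μ ≤ ∫ t, κ ^ p' * ‖s t‖ ^ q' ∂μ := by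
        have h1 : Integrable (fun t => ‖u t‖ ^ p') μ :=
          hint (fun c => ‖((κ : ℝ) : 𝕜) • ψ c‖ ^ p')
        exact integral_mono h1 (hint fun c => κ ^ p' * ‖c‖ ^ q') hpt
      calc ∫ t, ‖u t‖ ^ p' ∂μ ≤ ∫ t, κ ^ p' * ‖s t‖ ^ q' ∂μ := hmono
        _ = κ ^ p' * I := by rw [integral_const_mul]
        _ = I⁻¹ * I := by rw [hκp]
        _ = 1 := inv_mul_cancel₀ hIpos.ne'
    refine ⟨u, hu_mem, ?_, ?_⟩
    · rw [hu_mem.eLpNorm_eq_integral_rpow_norm hp0 hp_ne_top]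
      refine ENNReal.ofReal_le_one.mpr ?_
      refine Real.rpow_le_one (integral_nonneg fun t => Real.rpow_nonneg (norm_nonneg _) _)
        hu_int_le (by positivity)
    · have hcalc : ∫ t, (s t) (u t) ∂μ = ((κ * ∫ t, χ (s t) ∂μ : ℝ) : 𝕜) := by
        have hpt : ∀ t, (s t) (u t) = ((κ * χ (s t) : ℝ) : 𝕜) := by
          intro t
          rw [hu_apply t, _root_.map_smul, smul_eq_mul, hpair (s t), ← RCLike.ofReal_mul]
        simp only [hpt]
        rw [integral_ofReal, integral_const_mul]
      rw [hcalc, RCLike.norm_ofReal]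
      have hκI : κ * I = I ^ q'⁻¹ := by
        have h1 : -p'⁻¹ + 1 = q'⁻¹ := by linarith [hreal]
        calc κ * I = I ^ (-p'⁻¹) * I ^ (1 : ℝ) := by rw [hκdef, Real.rpow_one]
          _ = I ^ (-p'⁻¹ + 1) := (Real.rpow_add hIpos _ _).symm
          _ = I ^ q'⁻¹ := by rw [h1]
      calc (1 - δ) * I ^ q'⁻¹ = κ * ((1 - δ) * I) := by rw [← hκI]; ring
        _ ≤ κ * ∫ t, χ (s t) ∂μ := mul_le_mul_of_nonneg_left h_int_low hκpos.le
        _ ≤ |κ * ∫ t, χ (s t) ∂μ| := le_abs_self _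

/-- the norming property of vector-valued `L^p`-duality.  Let `Y` be a
Banach space, `p, q ∈ [1,∞]` Hölder conjugates with `q < ∞`, and
`g ∈ L^q([0,τ], Y')`.  Then
`‖g‖_{L^q} = sup{ |∫₀^τ ⟨u(t), g(t)⟩ dt| : u ∈ L^p([0,τ], Y), ‖u‖_{L^p} ≤ 1 }`. -/
theorem Lp_dual_norming {𝕜 Y : Type*} [RCLike 𝕜] [NormedAddCommGroup Y]
    [NormedSpace 𝕜 Y] [CompleteSpace Y]
    {p q : ℝ≥0∞} (hpq : p⁻¹ + q⁻¹ = 1) (hq : q ≠ ⊤) {τ : ℝ} (hτ : 0 < τ)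
    (g : ℝ → StrongDual 𝕜 Y)
    (hg : MemLp g q (volume.restrict (Set.Ioc 0 τ))) :
    (eLpNorm g q (volume.restrict (Set.Ioc 0 τ))).toReal =
      sSup {r : ℝ | ∃ u : ℝ → Y,
        MemLp u p (volume.restrict (Set.Ioc 0 τ)) ∧
        eLpNorm u p (volume.restrict (Set.Ioc 0 τ)) ≤ 1 ∧
        r = ‖∫ t, (g t) (u t) ∂(volume.restrict (Set.Ioc 0 τ))‖} := by
  set μ : Measure ℝ := volume.restrict (Set.Ioc 0 τ) with hμdef
  haveI : IsFiniteMeasure μ := by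
    constructor
    rw [hμdef, Measure.restrict_apply_univ]
    exact measure_Ioc_lt_top
  set S : Set ℝ := {r : ℝ | ∃ u : ℝ → Y, MemLp u p μ ∧ eLpNorm u p μ ≤ 1 ∧
    r = ‖∫ t, (g t) (u t) ∂μ‖} with hSdef
  set M : ℝ := (eLpNorm g q μ).toReal with hMdef
  have hq1 : 1 ≤ q := ENNReal.inv_le_one.mp (hpq ▸ le_add_self)
  have hM_nonneg : 0 ≤ M := ENNReal.toReal_nonneg
  have hub : ∀ r ∈ S, r ≤ M := by
    rintro r ⟨u, hu_mem, hu_norm, rfl⟩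
    have h := (Lp_dual_norming_pairing_memL1 hpq hg hu_mem).2
    have h2 : (eLpNorm u p μ).toReal ≤ 1 := by
      have := ENNReal.toReal_mono ENNReal.one_ne_top hu_norm
      simpa using this
    calc ‖∫ t, (g t) (u t) ∂μ‖ ≤ M * (eLpNorm u p μ).toReal := h
      _ ≤ M * 1 := mul_le_mul_of_nonneg_left h2 hM_nonneg
      _ = M := mul_one M
  have hS_ne : (0 : ℝ) ∈ S := ⟨0, MemLp.zero, by simp, by simp⟩
  have hbdd : BddAbove S := ⟨M, hub⟩
  refine le_antisymm ?_ (csSup_le ⟨0, hS_ne⟩ hub)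
  refine le_of_forall_pos_le_add fun ε hε => ?_
  set δ : ℝ := min (ε / (M + 2)) (1 / 2) with hδdef
  have hδpos : 0 < δ := lt_min (div_pos hε (by linarith)) (by norm_num)
  have hδ1 : δ < 1 := lt_of_le_of_lt (min_le_right _ _) (by norm_num)
  have hδε : δ * (M + 2) ≤ ε := by
    have h1 : δ ≤ ε / (M + 2) := min_le_left _ _
    calc δ * (M + 2) ≤ (ε / (M + 2)) * (M + 2) := by nlinarith
      _ = ε := div_mul_cancel₀ ε (by linarith : M + 2 ≠ 0)
  obtain ⟨s, hs_close, hs_mem⟩ :=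
    hg.exists_simpleFunc_eLpNorm_sub_lt hq (ENNReal.ofReal_pos.mpr hδpos).ne'
  obtain ⟨u, hu_mem, hu_norm, hu_low⟩ := Lp_dual_norming_simpleFunc (μ := μ) hpq hq s hδpos hδ1
  have hdiff_mem : MemLp (g - ⇑s) q μ := hg.sub hs_mem
  have hd := Lp_dual_norming_pairing_memL1 hpq hdiff_mem hu_mem
  have hsp := Lp_dual_norming_pairing_memL1 hpq hs_mem hu_mem
  have hu1 : (eLpNorm u p μ).toReal ≤ 1 := by
    have := ENNReal.toReal_mono ENNReal.one_ne_top hu_norm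
    simpa using this
  -- split the integral
  have hsplit : ∫ t, (g t) (u t) ∂μ
      = (∫ t, (s t) (u t) ∂μ) + ∫ t, ((g - ⇑s) t) (u t) ∂μ := by
    rw [← integral_add hsp.1 hd.1]
    refine integral_congr_ae (Filter.Eventually.of_forall fun t => ?_)
    simp [ContinuousLinearMap.sub_apply]
  -- the perturbation is small
  have hA : ‖∫ t, ((g - ⇑s) t) (u t) ∂μ‖ ≤ δ := by
    have hclose : (eLpNorm (g - ⇑s) q μ).toReal ≤ δ :=
      ENNReal.toReal_le_of_le_ofReal hδpos.le hs_close.le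
    calc ‖∫ t, ((g - ⇑s) t) (u t) ∂μ‖
        ≤ (eLpNorm (g - ⇑s) q μ).toReal * (eLpNorm u p μ).toReal := hd.2
      _ ≤ δ * 1 := mul_le_mul hclose hu1 ENNReal.toReal_nonneg hδpos.le
      _ = δ := mul_one δ
  -- s has almost full norm
  have hB : M - δ ≤ (eLpNorm (⇑s) q μ).toReal := by
    have htri : eLpNorm g q μ ≤ eLpNorm (g - ⇑s) q μ + eLpNorm (⇑s) q μ := by
      calc eLpNorm g q μ = eLpNorm ((g - ⇑s) + ⇑s) q μ := by rw [sub_add_cancel]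
        _ ≤ _ := eLpNorm_add_le (f := g - ⇑s) (g := ⇑s) hdiff_mem.aestronglyMeasurable hs_mem.aestronglyMeasurable hq1
    have hfin1 : eLpNorm (g - ⇑s) q μ ≠ ∞ := hdiff_mem.eLpNorm_ne_top
    have hfin2 : eLpNorm (⇑s) q μ ≠ ∞ := hs_mem.eLpNorm_ne_top
    have := ENNReal.toReal_mono (by simp [ENNReal.add_ne_top, hfin1, hfin2]) htri
    rw [ENNReal.toReal_add hfin1 hfin2] at this
    have hclose : (eLpNorm (g - ⇑s) q μ).toReal ≤ δ :=
      ENNReal.toReal_le_of_le_ofReal hδpos.le hs_close.le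
    linarith [this, hclose]
  -- put it together
  have hr_mem : ‖∫ t, (g t) (u t) ∂μ‖ ∈ S := ⟨u, hu_mem, hu_norm, rfl⟩
  have hr_low : (1 - δ) * (M - δ) - δ ≤ ‖∫ t, (g t) (u t) ∂μ‖ := by
    have h1 : ‖∫ t, (s t) (u t) ∂μ‖ - ‖∫ t, ((g - ⇑s) t) (u t) ∂μ‖
        ≤ ‖∫ t, (g t) (u t) ∂μ‖ := by
      rw [hsplit]
      have := norm_add_le (∫ t, (s t) (u t) ∂μ + ∫ t, ((g - ⇑s) t) (u t) ∂μ)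
        (-(∫ t, ((g - ⇑s) t) (u t) ∂μ))
      simp only [add_neg_cancel_right, norm_neg] at this
      linarith
    have h2 : (1 - δ) * (M - δ) ≤ (1 - δ) * (eLpNorm (⇑s) q μ).toReal :=
      mul_le_mul_of_nonneg_left hB (by linarith)
    linarith [hu_low, hA, h1, h2]
  have hr_le : ‖∫ t, (g t) (u t) ∂μ‖ ≤ sSup S := le_csSup hbdd hr_mem
  nlinarith [hr_low, hr_le, hδε, hδpos, hM_nonneg, hδ1]
end

section
/- In an ordered Banach space Y whose norm is additive on the positive cone (‖x+y‖ = ‖x‖+‖y‖ for x, y ≥ 0) and whose cone is generating and normal, the dual space Y' has an order unit: there exists e ∈ Y'_+ such that Y' = ⋃_{λ>0} [−λe, λe]. Consequently the positive cone of Y' is generating: every element of Y' is a difference of two positive functionals. -/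
open scoped Classical

/-- let `Y` be an ordered Banach space whose closed positive cone `C` is
generating and normal, and whose norm is additive on the cone.  Then the dual `Y'` has
an order unit `e` for the dual cone: `Y' = ⋃_{λ>0} [−λe, λe]`, and consequently the dual
cone is generating. -/
theorem dual_order_unit_of_additive_norm {Y : Type*} [NormedAddCommGroup Y]
    [NormedSpace ℝ Y] [CompleteSpace Y] (C : Set Y)
    (hclosed : IsClosed C)
    (hadd : ∀ x ∈ C, ∀ y ∈ C, x + y ∈ C)
    (hsmul : ∀ r : ℝ, 0 ≤ r → ∀ x ∈ C, r • x ∈ C)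
    (hpointed : C ∩ (-C) = {0})
    (hgen : ∀ y : Y, ∃ a ∈ C, ∃ b ∈ C, y = a - b)
    (hnormal : ∃ M : ℝ, 1 ≤ M ∧ ∀ x y : Y, x ∈ C → y - x ∈ C → ‖x‖ ≤ M * ‖y‖)
    (hnorm_add : ∀ x ∈ C, ∀ y ∈ C, ‖x + y‖ = ‖x‖ + ‖y‖) :
    (∃ e : StrongDual ℝ Y, (∀ x ∈ C, 0 ≤ e x) ∧
      ∀ φ : StrongDual ℝ Y, ∃ l : ℝ, 0 < l ∧
        (∀ x ∈ C, 0 ≤ (l • e - φ) x) ∧ (∀ x ∈ C, 0 ≤ (φ + l • e) x)) ∧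
    (∀ φ : StrongDual ℝ Y, ∃ ψ₁ ψ₂ : StrongDual ℝ Y,
      (∀ x ∈ C, 0 ≤ ψ₁ x) ∧ (∀ x ∈ C, 0 ≤ ψ₂ x) ∧ φ = ψ₁ - ψ₂) := by
  have h0 : (0 : Y) ∈ C := by
    have : (0 : Y) ∈ C ∩ (-C) := by
      rw [hpointed]; rfl
    exact this.1
  -- well-definedness of `a - b ↦ ‖a‖ - ‖b‖`
  have key : ∀ a ∈ C, ∀ b ∈ C, ∀ a' ∈ C, ∀ b' ∈ C, a - b = a' - b' →
      ‖a‖ - ‖b‖ = ‖a'‖ - ‖b'‖ := by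
    intro a ha b hb a' ha' b' hb' h
    have hsum : a + b' = a' + b := sub_eq_sub_iff_add_eq_add.mp h
    have h1 := hnorm_add a ha b' hb'
    have h2 := hnorm_add a' ha' b hb
    rw [hsum, h2] at h1
    linarith
  choose g1 hg1 g2 hg2 hgd using hgen
  set f : Y → ℝ := fun y => ‖g1 y‖ - ‖g2 y‖ with hf
  have fval : ∀ a ∈ C, ∀ b ∈ C, ∀ y : Y, y = a - b → f y = ‖a‖ - ‖b‖ := by
    intro a ha b hb y hy
    exact key _ (hg1 y) _ (hg2 y) a ha b hb (by rw [← hgd y, hy])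
  have fC : ∀ x ∈ C, f x = ‖x‖ := by
    intro x hx
    have := fval x hx 0 h0 x (by simp)
    simpa using this
  have fadd : ∀ y z : Y, f (y + z) = f y + f z := by
    intro y z
    have hdec : y + z = (g1 y + g1 z) - (g2 y + g2 z) := by
      conv_lhs => rw [hgd y, hgd z]
      abel
    have h := fval (g1 y + g1 z) (hadd _ (hg1 y) _ (hg1 z))
      (g2 y + g2 z) (hadd _ (hg2 y) _ (hg2 z)) (y + z) hdec
    rw [h, hnorm_add _ (hg1 y) _ (hg1 z), hnorm_add _ (hg2 y) _ (hg2 z)]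
    simp only [hf]
    ring
  have fsmul : ∀ (r : ℝ) (y : Y), f (r • y) = r * f y := by
    intro r y
    rcases le_or_gt 0 r with hr | hr
    · have hdec : r • y = r • g1 y - r • g2 y := by
        conv_lhs => rw [hgd y]
        rw [smul_sub]
      have h := fval (r • g1 y) (hsmul r hr _ (hg1 y)) (r • g2 y) (hsmul r hr _ (hg2 y))
        (r • y) hdec
      rw [h, norm_smul, norm_smul, Real.norm_eq_abs, abs_of_nonneg hr]
      simp only [hf]
      ring
    · have hr' : (0 : ℝ) ≤ -r := by linarith
      have hdec : r • y = (-r) • g2 y - (-r) • g1 y := by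
        conv_lhs => rw [hgd y]
        module
      have h := fval ((-r) • g2 y) (hsmul _ hr' _ (hg2 y)) ((-r) • g1 y)
        (hsmul _ hr' _ (hg1 y)) (r • y) hdec
      rw [h, norm_smul, norm_smul, Real.norm_eq_abs, abs_of_nonneg hr']
      simp only [hf]
      ring
  have fbound : ∀ y : Y, ‖f y‖ ≤ 1 * ‖y‖ := by
    intro y
    rw [Real.norm_eq_abs, one_mul, hf]
    calc |‖g1 y‖ - ‖g2 y‖| ≤ ‖g1 y - g2 y‖ := abs_norm_sub_norm_le _ _
      _ = ‖y‖ := by rw [← hgd y]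
  let e : StrongDual ℝ Y :=
    LinearMap.mkContinuous
      { toFun := f
        map_add' := fadd
        map_smul' := fsmul } 1 fbound
  have he : ∀ x : Y, e x = f x := fun _ => rfl
  have hepos : ∀ x ∈ C, 0 ≤ e x := by
    intro x hx
    rw [he, fC x hx]
    exact norm_nonneg x
  have hunit : ∀ φ : StrongDual ℝ Y, ∃ l : ℝ, 0 < l ∧
      (∀ x ∈ C, 0 ≤ (l • e - φ) x) ∧ (∀ x ∈ C, 0 ≤ (φ + l • e) x) := by
    intro φ
    refine ⟨‖φ‖ + 1, by positivity, ?_, ?_⟩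
    · intro x hx
      have h1 : φ x ≤ ‖φ‖ * ‖x‖ := le_trans (le_abs_self _)
        (by simpa [Real.norm_eq_abs] using φ.le_opNorm x)
      have h2 : (‖φ‖ + 1) * ‖x‖ = (‖φ‖ + 1) * e x := by rw [he, fC x hx]
      simp only [ContinuousLinearMap.sub_apply, ContinuousLinearMap.smul_apply,
        smul_eq_mul]
      nlinarith [norm_nonneg x]
    · intro x hx
      have h1 : -(‖φ‖ * ‖x‖) ≤ φ x := by
        have := abs_le.mp (by simpa [Real.norm_eq_abs] using φ.le_opNorm x)
        linarith [this.1]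
      simp only [ContinuousLinearMap.add_apply, ContinuousLinearMap.smul_apply,
        smul_eq_mul, he, fC x hx]
      nlinarith [norm_nonneg x]
  refine ⟨⟨e, hepos, hunit⟩, ?_⟩
  intro φ
  obtain ⟨l, hl, h1, h2⟩ := hunit φ
  refine ⟨φ + l • e, l • e, h2, ?_, by abel⟩
  intro x hx
  simp only [ContinuousLinearMap.smul_apply, smul_eq_mul]
  exact mul_nonneg hl.le (hepos x hx)
end
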